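/- If C is a symmetric invertible 2×2 real matrix, then the map M(ξ,η) = (ξ + C⁻ᵀ(−η + Cξ + ∇U(ξ)), Cξ) is reversible: with S(ξ,η) = (C⁻¹η, Cξ) one has S ∘ M = M⁻¹ ∘ S, and S is an involution whose fixed set is the plane {(ξ, Cξ) : ξ ∈ ℝ²}. -/

import Mathlib

open Matrix

/-- For symmetric invertible C, the map
M(ξ,η) = (ξ + C⁻¹(−η + Cξ + ∇U(ξ)), Cξ) is reversible: with S(ξ,η) = (C⁻¹η, Cξ),
S ∘ M = M⁻¹ ∘ S, S is an involution, and Fix(S) = {(ξ, Cξ)}. (Here g = ∇U.) -/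
theorem stmt_18 (C : Matrix (Fin 2) (Fin 2) ℝ) (hC : IsUnit C.det) (hsym : Cᵀ = C)
    (g : (Fin 2 → ℝ) → (Fin 2 → ℝ)) :
    let M : (Fin 2 → ℝ) × (Fin 2 → ℝ) → (Fin 2 → ℝ) × (Fin 2 → ℝ) := fun p =>
      (p.1 + C⁻¹.mulVec (-p.2 + C.mulVec p.1 + g p.1), C.mulVec p.1)
    let Minv : (Fin 2 → ℝ) × (Fin 2 → ℝ) → (Fin 2 → ℝ) × (Fin 2 → ℝ) := fun p =>
      (C⁻¹.mulVec p.2,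
        p.2 + C.mulVec (-p.1 + C⁻¹.mulVec p.2) + g (C⁻¹.mulVec p.2))
    let S : (Fin 2 → ℝ) × (Fin 2 → ℝ) → (Fin 2 → ℝ) × (Fin 2 → ℝ) := fun p =>
      (C⁻¹.mulVec p.2, C.mulVec p.1)
    (∀ p, Minv (M p) = p) ∧ (∀ p, M (Minv p) = p) ∧
    (∀ p, S (M p) = Minv (S p)) ∧
    (∀ p, S (S p) = p) ∧
    (∀ p, S p = p ↔ ∃ ξ : Fin 2 → ℝ, p = (ξ, C.mulVec ξ)) := by
  intro M Minv S
  have h1 : ∀ v : Fin 2 → ℝ, C⁻¹.mulVec (C.mulVec v) = v := by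
    intro v; rw [mulVec_mulVec, nonsing_inv_mul _ hC, one_mulVec]
  have h2 : ∀ v : Fin 2 → ℝ, C.mulVec (C⁻¹.mulVec v) = v := by
    intro v; rw [mulVec_mulVec, mul_nonsing_inv _ hC, one_mulVec]
  refine ⟨?_, ?_, ?_, ?_, ?_⟩
  · intro p
    simp only [M, Minv, h1, h2, Prod.mk.injEq, mulVec_add, mulVec_neg, Prod.ext_iff]
    constructor
    · trivial
    · abel
  · intro p
    simp only [M, Minv, h1, h2, Prod.mk.injEq, mulVec_add, mulVec_neg, Prod.ext_iff]
    constructor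
    · abel_nf
    · trivial
  · intro p
    simp only [M, Minv, S, h1, h2, Prod.mk.injEq, mulVec_add, mulVec_neg]
    constructor
    · trivial
    · abel
  · intro p
    simp only [S, h1, h2]
  · intro p
    constructor
    · intro h
      refine ⟨p.1, ?_⟩
      have := congrArg Prod.snd h
      simp only [S] at this
      exact Prod.ext rfl this.symm
    · rintro ⟨ξ, rfl⟩
      simp only [S, h1]
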